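/- Let T be a finite rooted tree where agents occupy leaves and items occupy internal vertices, such that every subtree rooted at a non-root vertex contains one more agent than items, and the root's single child has subtree containing all agents. Suppose every non-root internal vertex has exactly two children and the tree has depth k (so there are 2^k leaves). Then for any bijection M from agents to items, there exists a leaf agent a and a set U of k distinct agents (the 'unlucky' agents), one chosen at each of the k levels along the path from the root's child to a, such that each agent in U is matched by M to an item outside the subtree containing that agent at the level where it was designated, and a is not in U. -/
import Mathlib


open scoped Classical in
/-- The adversarial descent in the Ω(log n) lower bound: in a binary lower-bound tree
of depth `k`, for any matching `M` of agents (leaves) to items (internal vertices) there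
is a leaf agent `a` and `k` distinct "unlucky" agents, one at each level along the path
from the root's child to `a`, each matched outside the subtree at its level, none equal to `a`. -/
theorem stmt12 {V : Type*} [Fintype V] (r : V) (par : V → V) (k : ℕ)
    (hroot : par r = r) (hreach : ∀ v, ∃ m, par^[m] v = r)
    (leaves internal : Finset V)
    (hleaves : leaves = Finset.univ.filter (fun v => ∀ u, par u = v → u = r))
    (hinternal : internal = Finset.univ.filter (fun v => ∃ u, par u = v ∧ u ≠ r))
    (subtree : V → Finset V)
    (hsubtree : ∀ v, subtree v = Finset.univ.filter (fun u => ∃ m, par^[m] u = v))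
    (children : V → Finset V)
    (hchildren : ∀ v, children v = Finset.univ.filter (fun u => par u = v ∧ u ≠ r))
    -- the root has a single child `c`
    (c : V) (hc : c ≠ r) (hcr : par c = r) (hconly : ∀ u, par u = r → u ≠ r → u = c)
    -- every non-root internal vertex has exactly two children
    (hbinary : ∀ v ∈ internal, v ≠ r → (children v).card = 2)
    -- every leaf is at depth exactly k+1 (so the tree has 2^k leaves)
    (hdepth : ∀ a ∈ leaves, par^[k + 1] a = r ∧ ∀ m ≤ k, par^[m] a ≠ r)
    -- every subtree rooted at a non-root vertex has one more agent than items
    (hcount : ∀ v, v ≠ r → (leaves ∩ subtree v).card = (internal ∩ subtree v).card + 1)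
    (M : V → V) (hM : Set.BijOn M ↑leaves ↑internal) :
    ∃ a ∈ leaves, ∃ U : Fin k → V, Function.Injective U ∧
      ∀ i : Fin k, U i ∈ leaves ∧ U i ≠ a ∧
        U i ∈ subtree (par^[k - (i : ℕ)] a) ∧
        M (U i) ∉ subtree (par^[k - (i : ℕ)] a) := by
  have hrfix : ∀ n, par^[n] r = r := fun n => Function.iterate_fixed hroot n
  have hsub : ∀ v u : V, u ∈ subtree v ↔ ∃ m, par^[m] u = v := by
    intro v u; rw [hsubtree v]; simp
  have hleafmem : ∀ v : V, v ∈ leaves ↔ ∀ u, par u = v → u = r := by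
    intro v; rw [hleaves]; simp
  have hintmem : ∀ v : V, v ∈ internal ↔ ∃ u, par u = v ∧ u ≠ r := by
    intro v; rw [hinternal]; simp
  have hself : ∀ (t : ℕ) (x : V), x ∈ subtree (par^[t] x) :=
    fun t x => (hsub _ _).mpr ⟨t, rfl⟩
  have htrans : ∀ y z : V, y ∈ subtree z → ∀ q ∈ subtree y, q ∈ subtree z := by
    intro y z hyz q hq
    obtain ⟨n, hn⟩ := (hsub _ _).mp hyz
    obtain ⟨m, hm⟩ := (hsub _ _).mp hq
    exact (hsub _ _).mpr ⟨n + m, by rw [Function.iterate_add_apply, hm, hn]⟩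
  have hnocycle : ∀ v : V, v ≠ r → ∀ j, 1 ≤ j → par^[j] v ≠ v := by
    intro v hv j hj hcyc
    obtain ⟨m, hm⟩ := hreach v
    have hiter : ∀ t, par^[j * t] v = v := by
      intro t
      induction t with
      | zero => simp
      | succ t ih => rw [Nat.mul_succ, Function.iterate_add_apply, hcyc, ih]
    rcases Nat.eq_zero_or_pos m with h0 | h1
    · subst h0; simp at hm; exact hv hm
    · have hge : m ≤ j * m := Nat.le_mul_of_pos_left m hj
      obtain ⟨d, hd⟩ : ∃ d, j * m = m + d := ⟨j * m - m, by omega⟩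
      have : par^[j * m] v = r := by
        rw [hd, Nat.add_comm, Function.iterate_add_apply, hm, hrfix]
      rw [hiter m] at this
      exact hv this
  have hdisj : ∀ v : V, v ≠ r → ∀ w w' : V, par w = v → par w' = v → w ≠ w' →
      ∀ x ∈ subtree w, x ∉ subtree w' := by
    intro v hv w w' hw hw' hne x hxw hxw'
    obtain ⟨m, hm⟩ := (hsub _ _).mp hxw
    obtain ⟨n, hn⟩ := (hsub _ _).mp hxw'
    have haux : ∀ (a b : V) (p q : ℕ), p < q → par^[p] x = a → par^[q] x = b →
        par a = v → par b = v → False := by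
      intro a b p q hpq hp hq hpa hpb
      have hb : par^[q - p] a = b := by
        rw [← hp, ← Function.iterate_add_apply, show q - p + p = q by omega, hq]
      have hcyc : par^[q - p] v = v := by
        calc par^[q - p] v = par^[q - p] (par a) := by rw [hpa]
          _ = par^[(q - p) + 1] a := (Function.iterate_succ_apply par _ a).symm
          _ = par (par^[q - p] a) := Function.iterate_succ_apply' par _ a
          _ = par b := by rw [hb]
          _ = v := hpb
      exact hnocycle v hv (q - p) (by omega) hcyc
    rcases lt_trichotomy m n with h | h | h
    · exact haux w w' m n h hm hn hw hw'
    · apply hne; rw [← hm, h, hn]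
    · exact haux w' w n m h hn hm hw' hw
  have hagents : ∀ v : V, v ≠ r → ∃ u, (u ∈ leaves ∧ u ∈ subtree v) ∧ M u ∉ subtree v := by
    intro v hv
    by_contra hcon
    push_neg at hcon
    have hmaps : ∀ u ∈ leaves ∩ subtree v, M u ∈ internal ∩ subtree v := by
      intro u hu
      rw [Finset.mem_inter] at hu ⊢
      refine ⟨?_, hcon u ⟨hu.1, hu.2⟩⟩
      have := hM.mapsTo (Finset.mem_coe.mpr hu.1)
      exact Finset.mem_coe.mp this
    have hinj : Set.InjOn M ↑(leaves ∩ subtree v) :=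
      hM.injOn.mono (Finset.coe_subset.mpr (Finset.inter_subset_left))
    have hcard := Finset.card_le_card_of_injOn M hmaps hinj
    rw [hcount v hv] at hcard
    omega
  have hintof : ∀ (x : V) (j : ℕ), x ≠ r → j ≤ k → par^[j] x = r →
      ∃ u, par u = x ∧ u ≠ r := by
    intro x j hx hj hjx
    have hne : (leaves ∩ subtree x).Nonempty := by
      rw [← Finset.card_pos, hcount x hx]; omega
    obtain ⟨a', ha'⟩ := hne
    rw [Finset.mem_inter] at ha'
    obtain ⟨m, hm⟩ := (hsub _ _).mp ha'.2
    rcases Nat.eq_zero_or_pos m with h0 | h1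
    · exfalso
      subst h0; simp at hm; subst hm
      exact (hdepth _ ha'.1).2 j hj hjx
    · obtain ⟨m', rfl⟩ : ∃ m', m = m' + 1 := ⟨m - 1, by omega⟩
      refine ⟨par^[m'] a', ?_, ?_⟩
      · rw [← Function.iterate_succ_apply' par m' a']; exact hm
      · intro hr
        have : par (par^[m'] a') = x := by
          rw [← Function.iterate_succ_apply' par m' a']; exact hm
        rw [hr, hroot] at this
        exact hx this.symm
  have main : ∀ j, j ≤ k → ∃ x : V, par^[j + 1] x = r ∧ (∀ m ≤ j, par^[m] x ≠ r) ∧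
      ∃ u : ℕ → V, ∀ i < j, u i ∈ leaves ∧ u i ∈ subtree (par^[j - i] x) ∧
        M (u i) ∉ subtree (par^[j - i] x) ∧ u i ∉ subtree (par^[j - i - 1] x) := by
    intro j
    induction j with
    | zero =>
      intro _
      refine ⟨c, by simpa using hcr, ?_, fun _ => r, by omega⟩
      intro m hm; interval_cases m; simpa using hc
    | succ j ih =>
      intro hjk
      obtain ⟨x, hx1, hx2, u, hu⟩ := ih (by omega)
      have hxr : x ≠ r := by simpa using hx2 0 (by omega)
      have hxint : ∃ u0, par u0 = x ∧ u0 ≠ r := hintof x (j + 1) hxr hjk hx1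
      obtain ⟨uu, ⟨huuL, huuS⟩, huuM⟩ := hagents x hxr
      have huux : uu ≠ x := by
        intro h; subst h
        obtain ⟨u0, hu0, hu0r⟩ := hxint
        exact hu0r ((hleafmem _).mp huuL u0 hu0)
      obtain ⟨m, hm⟩ := (hsub _ _).mp huuS
      have hm1 : 1 ≤ m := by
        rcases Nat.eq_zero_or_pos m with h | h
        · subst h; simp at hm; exact absurd hm huux
        · exact h
      obtain ⟨m', rfl⟩ : ∃ m', m = m' + 1 := ⟨m - 1, by omega⟩
      have hw0 : par (par^[m'] uu) = x := by
        rw [← Function.iterate_succ_apply' par m' uu]; exact hm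
      have hw0r : par^[m'] uu ≠ r := by
        intro h; rw [h, hroot] at hw0; exact hxr hw0.symm
      have huuw0 : uu ∈ subtree (par^[m'] uu) := hself m' uu
      have hxInt : x ∈ internal := (hintmem x).mpr hxint
      have hcard2 : (children x).card = 2 := hbinary x hxInt hxr
      have hw0c : par^[m'] uu ∈ children x := by
        rw [hchildren]; simp [hw0, hw0r]
      obtain ⟨w, hwc, hwne⟩ :=
        Finset.exists_mem_ne (s := children x) (by omega) (par^[m'] uu)
      rw [hchildren] at hwc; simp at hwc
      obtain ⟨hw, hwr⟩ := hwc
      have huuw : uu ∉ subtree w :=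
        hdisj x hxr (par^[m'] uu) w hw0 hw (Ne.symm hwne) uu huuw0
      have hkey : ∀ t : ℕ, par^[t + 1] w = par^[t] x := fun t => by
        rw [Function.iterate_succ_apply, hw]
      refine ⟨w, ?_, ?_, fun i => if i = j then uu else u i, ?_⟩
      · rw [Function.iterate_succ_apply, hw]; exact hx1
      · intro m hm2
        rcases Nat.eq_zero_or_pos m with h | h
        · subst h; simpa using hwr
        · obtain ⟨t, rfl⟩ : ∃ t, m = t + 1 := ⟨m - 1, by omega⟩
          rw [Function.iterate_succ_apply, hw]
          exact hx2 t (by omega)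
      · intro i hij
        rcases Nat.lt_or_ge i j with h | h
        · have e1 : j + 1 - i = (j - i - 1 + 1) + 1 := by omega
          have e2 : j + 1 - i - 1 = (j - i - 1) + 1 := by omega
          obtain ⟨h1, h2, h3, h4⟩ := hu i h
          have e3 : j - i = j - i - 1 + 1 := by omega
          rw [e3] at h2 h3
          refine ⟨?_, ?_, ?_, ?_⟩ <;> simp only [if_neg (by omega : ¬ i = j)]
          · exact h1
          · rw [e1, hkey]; exact h2
          · rw [e1, hkey]; exact h3
          · rw [e2, hkey]; exact h4
        · have hij' : i = j := by omega
          subst hij'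
          simp only [if_pos rfl]
          refine ⟨huuL, ?_, ?_, ?_⟩
          · rw [show i + 1 - i = 1 by omega, Function.iterate_one, hw]; exact huuS
          · rw [show i + 1 - i = 1 by omega, Function.iterate_one, hw]; exact huuM
          · rw [show i + 1 - i - 1 = 0 by omega, Function.iterate_zero_apply]; exact huuw
  obtain ⟨x, hx1, hx2, u, hu⟩ := main k le_rfl
  have hxr : x ≠ r := by simpa using hx2 0 (Nat.zero_le k)
  have hxleaf : x ∈ leaves := by
    have hne : (leaves ∩ subtree x).Nonempty := by
      rw [← Finset.card_pos, hcount x hxr]; omega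
    obtain ⟨a', ha'⟩ := hne
    rw [Finset.mem_inter] at ha'
    obtain ⟨m, hm⟩ := (hsub _ _).mp ha'.2
    rcases Nat.eq_zero_or_pos m with h0 | h1
    · subst h0; simp at hm; subst hm; exact ha'.1
    · exfalso
      obtain ⟨hA, hB⟩ := hdepth a' ha'.1
      have hmk : m ≤ k := by
        by_contra hmk
        have : par^[m] a' = r := by
          obtain ⟨d, hd⟩ : ∃ d, m = (k + 1) + d := ⟨m - (k + 1), by omega⟩
          rw [hd, Nat.add_comm, Function.iterate_add_apply, hA, hrfix]
        exact hxr (by rw [← hm, this])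
      have : par^[k + 1 - m] x = r := by
        rw [← hm, ← Function.iterate_add_apply, show k + 1 - m + m = k + 1 by omega]
        exact hA
      exact hx2 (k + 1 - m) (by omega) this
  have key : ∀ p q : ℕ, p < q → q < k → u p ≠ u q := by
    intro p q hpq hqk heq
    have h2 := (hu q hqk).2.1
    have h4 := (hu p (by omega)).2.2.2
    have hsubset : par^[k - q] x ∈ subtree (par^[k - p - 1] x) := by
      refine (hsub _ _).mpr ⟨(k - p - 1) - (k - q), ?_⟩
      rw [← Function.iterate_add_apply]
      congr 1
      omega
    apply h4
    rw [heq]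
    exact htrans _ _ hsubset _ h2
  refine ⟨x, hxleaf, fun i => u i, ?_, ?_⟩
  · intro i j hij
    have hij' : u (i : ℕ) = u (j : ℕ) := hij
    by_contra hne
    have hne' : (i : ℕ) ≠ (j : ℕ) := fun h => hne (Fin.ext h)
    rcases Nat.lt_or_ge (i : ℕ) (j : ℕ) with h | h
    · exact key _ _ h j.isLt hij'
    · exact key _ _ (by omega) i.isLt hij'.symm
  · intro i
    obtain ⟨h1, h2, h3, h4⟩ := hu i i.isLt
    refine ⟨h1, ?_, h2, h3⟩
    intro h
    have h' : u (i : ℕ) = x := h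
    apply h4
    rw [h']
    exact hself _ x
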